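/- There is a coupling of the chain with matrix K_λ on V and the chain with matrix P^λ on V ∪ {∂}, both started from the same x ∈ V, under which for every starting state x the cover times of V satisfy E_x[τ_cov(K_λ,V)] ≤ E_x[τ_cov(P^λ,V)] ≤ 2·E_x[τ_cov(K_λ,V)]. -/

import Mathlib

open scoped BigOperators

/- `pathSum P x t A`: probability, for the chain with transition matrix `P` started
at `x`, of the event `A` about the first `t+1` positions of the trajectory. -/
open Classical in
noncomputable def pathSum {S : Type*} [Fintype S] (P : S → S → ℝ) (x : S) (t : ℕ)
    (A : (Fin (t+1) → S) → Prop) : ℝ :=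
  ∑ w : Fin (t+1) → S,
    if w 0 = x ∧ A w then ∏ i : Fin t, P (w i.castSucc) (w i.succ) else 0

/-- `P_x(τ_cov > t)`: the chain started at `x` has not visited every state by time `t`. -/
noncomputable def coverTail {S : Type*} [Fintype S] (P : S → S → ℝ) (x : S) (t : ℕ) : ℝ :=
  pathSum P x t (fun w => ¬ ∀ v : S, ∃ i, w i = v)

/-- `E_x[τ_cov]`, the expected cover time started from `x`. -/
noncomputable def expCov {S : Type*} [Fintype S] (P : S → S → ℝ) (x : S) : ℝ :=
  ∑' t : ℕ, coverTail P x t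

/-- `t_cov = max_x E_x[τ_cov]`. -/
noncomputable def tcov {S : Type*} [Fintype S] [Nonempty S] (P : S → S → ℝ) : ℝ :=
  ⨆ x : S, expCov P x

/-- The auxiliary transition matrix `P^λ` on `V ∪ {∂}`, where `∂` is modelled by
`none : Option V`. -/
def Plam {V : Type*} (P : V → V → ℝ) (π : V → ℝ) (lam : ℝ) :
    Option V → Option V → ℝ
  | some x, some y => (1 - lam) * P x y
  | some _, none => lam
  | none, some y => π y
  | none, none => 0

/-- `E_x[τ_cov(P^λ, V)]`: the expected time for the auxiliary chain on `V ∪ {∂}`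
started at `x` to visit every state of `V` (not necessarily `∂`). -/
noncomputable def expCovV {V : Type*} [Fintype V] (Q : Option V → Option V → ℝ)
    (x : Option V) : ℝ :=
  ∑' t : ℕ, pathSum Q x t (fun w => ¬ ∀ v : V, ∃ i, w i = some v)

section PathLemmas
open Classical
variable {S : Type*} [Fintype S]

lemma pathSum_congr (P : S → S → ℝ) (x : S) (t : ℕ) {A B : (Fin (t+1) → S) → Prop}
    (h : ∀ w : Fin (t+1) → S, w 0 = x → (A w ↔ B w)) :
    pathSum P x t A = pathSum P x t B := by
  unfold pathSum
  exact Finset.sum_congr rfl fun w _ =>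
    if_congr (and_congr_right fun h0 => h w h0) rfl rfl

lemma pathSum_zero (P : S → S → ℝ) (x : S) (A : (Fin 1 → S) → Prop) :
    pathSum P x 0 A = if A (fun _ => x) then 1 else 0 := by
  unfold pathSum
  rw [← (Equiv.funUnique (Fin 1) S).symm.sum_comp]
  have h1 : ∀ a : S, ((Equiv.funUnique (Fin 1) S).symm a) = (fun _ => a : Fin 1 → S) := by
    intro a; rfl
  have h2 : ∀ a : S,
      (if ((Equiv.funUnique (Fin 1) S).symm a) 0 = x ∧ A ((Equiv.funUnique (Fin 1) S).symm a)
        then ∏ i : Fin 0, P (((Equiv.funUnique (Fin 1) S).symm a) i.castSucc)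
          (((Equiv.funUnique (Fin 1) S).symm a) i.succ) else 0)
      = if a = x then (if A (fun _ => x) then (1:ℝ) else 0) else 0 := by
    intro a
    rw [h1]
    by_cases hax : a = x
    · subst hax; simp
    · simp [hax]
  rw [Finset.sum_congr rfl fun a _ => h2 a]
  simp

lemma pathSum_succ (P : S → S → ℝ) (x : S) (t : ℕ)
    (A : (Fin (t+2) → S) → Prop) (B : (Fin (t+1) → S) → Prop)
    (hAB : ∀ w : Fin (t+2) → S, w 0 = x → (A w ↔ B (fun i => w i.succ))) :
    pathSum P x (t+1) A = ∑ y, P x y * pathSum P y t B := by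
  unfold pathSum
  -- RHS
  have hR : ∀ y : S, P x y * (∑ w : Fin (t+1) → S,
        if w 0 = y ∧ B w then ∏ i : Fin t, P (w i.castSucc) (w i.succ) else 0)
      = ∑ w : Fin (t+1) → S, (if w 0 = y ∧ B w then
          P x y * ∏ i : Fin t, P (w i.castSucc) (w i.succ) else 0) := by
    intro y
    rw [Finset.mul_sum]
    exact Finset.sum_congr rfl fun w _ => by rw [mul_ite, mul_zero]
  rw [Finset.sum_congr rfl fun y _ => hR y, Finset.sum_comm]
  have hInner : ∀ w : Fin (t+1) → S, (∑ y : S, if w 0 = y ∧ B w then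
        P x y * ∏ i : Fin t, P (w i.castSucc) (w i.succ) else 0)
      = (if B w then P x (w 0) * ∏ i : Fin t, P (w i.castSucc) (w i.succ) else 0) := by
    intro w
    by_cases hB : B w
    · simp only [hB, and_true]
      rw [Finset.sum_eq_single (w 0)]
      · simp
      · intro y _ hy; rw [if_neg]; exact fun h => hy h.symm
      · intro h; exact absurd (Finset.mem_univ _) h
    · simp [hB]
  rw [Finset.sum_congr rfl fun w _ => hInner w]
  -- LHS
  rw [← (Fin.consEquiv (fun _ : Fin (t+2) => S)).sum_comp]
  rw [Fintype.sum_prod_type]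
  have hterm : ∀ (a : S) (w' : Fin (t+1) → S),
      (if (Fin.consEquiv (fun _ : Fin (t+2) => S)) (a, w') 0 = x ∧
          A ((Fin.consEquiv (fun _ : Fin (t+2) => S)) (a, w'))
        then ∏ i : Fin (t+1), P (((Fin.consEquiv (fun _ : Fin (t+2) => S)) (a, w')) i.castSucc)
            (((Fin.consEquiv (fun _ : Fin (t+2) => S)) (a, w')) i.succ) else 0)
      = if a = x then (if B w' then P x (w' 0) *
          ∏ i : Fin t, P (w' i.castSucc) (w' i.succ) else 0) else 0 := by
    intro a w'
    have hc : (Fin.consEquiv (fun _ : Fin (t+2) => S)) (a, w') = Fin.cons a w' := rfl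
    rw [hc]
    by_cases hax : a = x
    · subst hax
      have h0 : (Fin.cons a w' : Fin (t+2) → S) 0 = a := rfl
      have htail : (fun i : Fin (t+1) => (Fin.cons a w' : Fin (t+2) → S) i.succ) = w' := by
        funext i; simp
      have hiff : A (Fin.cons a w') ↔ B w' := by
        rw [hAB (Fin.cons a w') h0, htail]
      have hprod : (∏ i : Fin (t+1), P ((Fin.cons a w' : Fin (t+2) → S) i.castSucc)
            ((Fin.cons a w' : Fin (t+2) → S) i.succ))
          = P a (w' 0) * ∏ i : Fin t, P (w' i.castSucc) (w' i.succ) := by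
        rw [Fin.prod_univ_succ]
        have e0 : P ((Fin.cons a w' : Fin (t+2) → S) (0 : Fin (t+1)).castSucc)
            ((Fin.cons a w' : Fin (t+2) → S) (0 : Fin (t+1)).succ) = P a (w' 0) := by
          simp
        rw [e0]
        refine congrArg (fun z => P a (w' 0) * z) ?_
        refine Finset.prod_congr rfl fun i _ => ?_
        rw [← Fin.succ_castSucc]
        simp [Fin.cons_succ]
      rw [hprod]
      simp [h0, hiff]
    · rw [if_neg hax, if_neg]
      intro hcon
      exact hax (by simpa using hcon.1)
  rw [Finset.sum_congr rfl fun a _ => Finset.sum_congr rfl fun w' _ => hterm a w']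
  rw [Finset.sum_comm]
  refine Finset.sum_congr rfl fun w' _ => ?_
  rw [Finset.sum_ite_eq' Finset.univ x]
  simp

end PathLemmas

section PathLemmas2
open Classical
variable {S : Type*} [Fintype S] {P : S → S → ℝ}

lemma pathSum_nonneg (hnn : ∀ x y, 0 ≤ P x y) (x : S) (t : ℕ)
    (A : (Fin (t+1) → S) → Prop) : 0 ≤ pathSum P x t A := by
  unfold pathSum
  refine Finset.sum_nonneg fun w _ => ?_
  split
  · exact Finset.prod_nonneg fun i _ => hnn _ _
  · exact le_refl 0

lemma pathSum_mono (hnn : ∀ x y, 0 ≤ P x y) (x : S) (t : ℕ)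
    {A B : (Fin (t+1) → S) → Prop} (h : ∀ w, A w → B w) :
    pathSum P x t A ≤ pathSum P x t B := by
  unfold pathSum
  refine Finset.sum_le_sum fun w _ => ?_
  by_cases hA : w 0 = x ∧ A w
  · rw [if_pos hA, if_pos ⟨hA.1, h w hA.2⟩]
  · rw [if_neg hA]
    split
    · exact Finset.prod_nonneg fun i _ => hnn _ _
    · exact le_refl 0

lemma pathSum_total (hrow : ∀ x, ∑ y, P x y = 1) (x : S) (t : ℕ) :
    pathSum P x t (fun _ => True) = 1 := by
  induction t generalizing x with
  | zero => rw [pathSum_zero]; simp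
  | succ t ih =>
    rw [pathSum_succ P x t _ (fun _ => True) (fun _ _ => Iff.rfl)]
    simp only [ih]
    simpa using hrow x

lemma pathSum_add_compl (x : S) (t : ℕ) (A : (Fin (t+1) → S) → Prop) :
    pathSum P x t A + pathSum P x t (fun w => ¬ A w) = pathSum P x t (fun _ => True) := by
  unfold pathSum
  rw [← Finset.sum_add_distrib]
  refine Finset.sum_congr rfl fun w _ => ?_
  by_cases h0 : w 0 = x
  · by_cases hA : A w
    · rw [if_pos ⟨h0, hA⟩, if_neg (fun h => h.2 hA), if_pos ⟨h0, trivial⟩, add_zero]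
    · rw [if_neg (fun h => hA h.2), if_pos ⟨h0, hA⟩, if_pos ⟨h0, trivial⟩, zero_add]
  · rw [if_neg (fun h => h0 h.1), if_neg (fun h => h0 h.1), if_neg (fun h => h0 h.1), add_zero]

lemma single_le_pathSum (hnn : ∀ x y, 0 ≤ P x y) (x : S) (t : ℕ)
    (A : (Fin (t+1) → S) → Prop) (w0 : Fin (t+1) → S) (h0 : w0 0 = x) (hA : A w0) :
    (∏ i : Fin t, P (w0 i.castSucc) (w0 i.succ)) ≤ pathSum P x t A := by
  unfold pathSum
  have := Finset.single_le_sum (f := fun w : Fin (t+1) → S =>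
      if w 0 = x ∧ A w then ∏ i : Fin t, P (w i.castSucc) (w i.succ) else 0)
    (fun w _ => by
      split
      · exact Finset.prod_nonneg fun i _ => hnn _ _
      · exact le_refl 0) (Finset.mem_univ w0)
  simp only [if_pos (⟨h0, hA⟩ : w0 0 = x ∧ A w0)] at this
  exact this

end PathLemmas2

section Gtail
open Classical
variable {S : Type*} [Fintype S] [DecidableEq S]

/-- Probability that, starting at `x`, after `t` steps some element of `R` is still unvisited. -/
noncomputable def gtail (P : S → S → ℝ) (x : S) (t : ℕ) (R : Finset S) : ℝ :=
  pathSum P x t (fun w => ¬ ∀ v ∈ R, ∃ i, w i = v)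

variable {P : S → S → ℝ}

lemma gtail_zero (P : S → S → ℝ) (x : S) (R : Finset S) :
    gtail P x 0 R = if (∀ v ∈ R, v = x) then 0 else 1 := by
  unfold gtail
  rw [pathSum_zero]
  by_cases h : ∀ v ∈ R, v = x
  · rw [if_pos h, if_neg]
    intro hcon
    exact hcon fun v hv => ⟨0, (h v hv).symm⟩
  · rw [if_neg h, if_pos]
    intro hcon
    exact h fun v hv => by
      obtain ⟨i, hi⟩ := hcon v hv
      exact hi.symm

lemma gtail_succ (P : S → S → ℝ) (x : S) (t : ℕ) (R : Finset S) :
    gtail P x (t+1) R = ∑ y, P x y * gtail P y t (R.erase x) := by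
  unfold gtail
  refine pathSum_succ P x t _ _ ?_
  intro w hw0
  refine not_congr ?_
  constructor
  · intro h v hv
    obtain ⟨i, hi⟩ := h v (Finset.mem_of_mem_erase hv)
    rcases Fin.eq_zero_or_eq_succ i with h0 | ⟨j, hj⟩
    · exfalso
      exact (Finset.ne_of_mem_erase hv) (by rw [← hi, h0, hw0])
    · exact ⟨j, by simpa [← hj] using hi⟩
  · intro h v hv
    by_cases hvx : v = x
    · exact ⟨0, by rw [hw0, hvx]⟩
    · obtain ⟨j, hj⟩ := h v (Finset.mem_erase.mpr ⟨hvx, hv⟩)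
      exact ⟨j.succ, hj⟩

lemma gtail_nonneg (hnn : ∀ x y, 0 ≤ P x y) (x : S) (t : ℕ) (R : Finset S) :
    0 ≤ gtail P x t R := pathSum_nonneg hnn x t _

lemma gtail_le_one (hnn : ∀ x y, 0 ≤ P x y) (hrow : ∀ x, ∑ y, P x y = 1)
    (x : S) (t : ℕ) (R : Finset S) : gtail P x t R ≤ 1 := by
  have := pathSum_mono (P := P) hnn x t
    (A := fun w => ¬ ∀ v ∈ R, ∃ i, w i = v) (B := fun _ => True) (fun w _ => trivial)
  rw [pathSum_total hrow] at this
  exact this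

lemma gtail_eq_zero (hnn : ∀ x y, 0 ≤ P x y) (x : S) (t : ℕ) {R : Finset S}
    (h : ∀ v ∈ R, v = x) : gtail P x t R = 0 := by
  induction t generalizing x R with
  | zero => rw [gtail_zero, if_pos h]
  | succ t ih =>
    rw [gtail_succ]
    refine Finset.sum_eq_zero fun y _ => ?_
    rw [ih y (R := R.erase x) (fun v hv => absurd (h v (Finset.mem_of_mem_erase hv))
      (Finset.ne_of_mem_erase hv)), mul_zero]

lemma gtail_mono_set (hnn : ∀ x y, 0 ≤ P x y) (hrow : ∀ x, ∑ y, P x y = 1)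
    (x : S) (t : ℕ) {R R' : Finset S} (h : R ⊆ R') :
    gtail P x t R ≤ gtail P x t R' := by
  induction t generalizing x R R' with
  | zero =>
    rw [gtail_zero, gtail_zero]
    by_cases h' : ∀ v ∈ R', v = x
    · rw [if_pos h', if_pos fun v hv => h' v (h hv)]
    · rw [if_neg h']
      split
      · exact zero_le_one
      · exact le_refl 1
  | succ t ih =>
    rw [gtail_succ, gtail_succ]
    exact Finset.sum_le_sum fun y _ =>
      mul_le_mul_of_nonneg_left (ih y (Finset.erase_subset_erase x h)) (hnn x y)

lemma gtail_succ_le (hnn : ∀ x y, 0 ≤ P x y) (hrow : ∀ x, ∑ y, P x y = 1)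
    (x : S) (t : ℕ) (R : Finset S) : gtail P x (t+1) R ≤ gtail P x t R := by
  induction t generalizing x R with
  | zero =>
    rw [gtail_succ, gtail_zero]
    by_cases h : ∀ v ∈ R, v = x
    · rw [if_pos h]
      refine le_of_eq (Finset.sum_eq_zero fun y _ => ?_)
      rw [gtail_eq_zero hnn y 0 (fun v hv => absurd (h v (Finset.mem_of_mem_erase hv))
        (Finset.ne_of_mem_erase hv)), mul_zero]
    · rw [if_neg h]
      calc ∑ y, P x y * gtail P y 0 (R.erase x) ≤ ∑ y, P x y * 1 :=
            Finset.sum_le_sum fun y _ => mul_le_mul_of_nonneg_left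
              (gtail_le_one hnn hrow y 0 _) (hnn x y)
        _ = 1 := by simpa using hrow x
  | succ t ih =>
    rw [gtail_succ, gtail_succ P x t]
    exact Finset.sum_le_sum fun y _ => mul_le_mul_of_nonneg_left (ih y _) (hnn x y)

lemma gtail_anti (hnn : ∀ x y, 0 ≤ P x y) (hrow : ∀ x, ∑ y, P x y = 1)
    (x : S) {s t : ℕ} (hst : s ≤ t) (R : Finset S) : gtail P x t R ≤ gtail P x s R := by
  induction t with
  | zero => rw [Nat.le_zero.mp hst]
  | succ t ih =>
    rcases Nat.lt_or_ge s (t+1) with h | h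
    · exact le_trans (gtail_succ_le hnn hrow x t R) (ih (Nat.lt_succ_iff.mp h))
    · rw [Nat.le_antisymm hst h]

lemma gtail_submul (hnn : ∀ x y, 0 ≤ P x y) (hrow : ∀ x, ∑ y, P x y = 1)
    {t : ℕ} {M : ℝ} (hM0 : 0 ≤ M) (hM : ∀ y, gtail P y t Finset.univ ≤ M)
    (s : ℕ) (x : S) (R : Finset S) :
    gtail P x (s + t) R ≤ gtail P x s R * M := by
  induction s generalizing x R with
  | zero =>
    rw [Nat.zero_add, gtail_zero]
    by_cases h : ∀ v ∈ R, v = x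
    · rw [if_pos h, zero_mul, gtail_eq_zero hnn x t h]
    · rw [if_neg h, one_mul]
      exact le_trans (gtail_mono_set hnn hrow x t (Finset.subset_univ R)) (hM x)
  | succ s ih =>
    have harith : s + 1 + t = (s + t) + 1 := by omega
    rw [harith, gtail_succ, gtail_succ]
    rw [Finset.sum_mul]
    refine Finset.sum_le_sum fun y _ => ?_
    rw [mul_assoc]
    exact mul_le_mul_of_nonneg_left (ih y (R.erase x)) (hnn x y)

end Gtail

section Summability

lemma sum_range_pow_div_le {M : ℝ} (h0 : 0 ≤ M) (h1 : M < 1) (N : ℕ) (hN : 0 < N) (m : ℕ) :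
    ∑ i ∈ Finset.range m, M ^ (i / N) ≤ (N : ℝ) * (1 - M)⁻¹ := by
  classical
  rw [Finset.sum_comp (fun q => M ^ q) (· / N)]
  have hcard : ∀ q ∈ (Finset.range m).image (· / N),
      ({i ∈ Finset.range m | i / N = q}).card ≤ N := by
    intro q _
    have hsub : ({i ∈ Finset.range m | i / N = q}) ⊆ Finset.Ico (N * q) (N * q + N) := by
      intro i hi
      rw [Finset.mem_filter] at hi
      obtain ⟨_, hiq⟩ := hi
      have hd := Nat.div_add_mod i N
      have hm : i % N < N := Nat.mod_lt _ hN
      rw [hiq] at hd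
      rw [Finset.mem_Ico]
      omega
    calc ({i ∈ Finset.range m | i / N = q}).card ≤ (Finset.Ico (N * q) (N * q + N)).card :=
          Finset.card_le_card hsub
      _ = N := by rw [Nat.card_Ico]; omega
  calc ∑ q ∈ (Finset.range m).image (· / N), ({i ∈ Finset.range m | i / N = q}).card • M ^ q
      ≤ ∑ q ∈ (Finset.range m).image (· / N), (N : ℝ) * M ^ q := by
        refine Finset.sum_le_sum fun q hq => ?_
        rw [nsmul_eq_mul]
        exact mul_le_mul_of_nonneg_right (by exact_mod_cast hcard q hq) (pow_nonneg h0 q)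
    _ = (N : ℝ) * ∑ q ∈ (Finset.range m).image (· / N), M ^ q := by rw [Finset.mul_sum]
    _ ≤ (N : ℝ) * (1 - M)⁻¹ := by
        refine mul_le_mul_of_nonneg_left ?_ (Nat.cast_nonneg N)
        calc ∑ q ∈ (Finset.range m).image (· / N), M ^ q
            ≤ ∑' q : ℕ, M ^ q :=
              Summable.sum_le_tsum _ (fun q _ => pow_nonneg h0 q)
                (summable_geometric_of_lt_one h0 h1)
          _ = (1 - M)⁻¹ := tsum_geometric_of_lt_one h0 h1

lemma summable_of_subgeom {a : ℕ → ℝ} {M : ℝ} (ha : ∀ t, 0 ≤ a t) (hM0 : 0 ≤ M)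
    (hM1 : M < 1) {N : ℕ} (hN : 0 < N) (hbound : ∀ t, a t ≤ M ^ (t / N)) :
    Summable a :=
  summable_of_sum_range_le ha fun m =>
    le_trans (Finset.sum_le_sum fun i _ => hbound i) (sum_range_pow_div_le hM0 hM1 N hN m)

end Summability

def Plam' {V : Type*} (P : V → V → ℝ) (π : V → ℝ) (lam : ℝ) :
    Option V → Option V → ℝ
  | some x, some y => (1 - lam) * P x y
  | some _, none => lam
  | none, some y => π y
  | none, none => 0

section Main
open Classical
variable {V : Type*} [Fintype V] [DecidableEq V] [Nonempty V]
variable {P : V → V → ℝ} {π : V → ℝ} {lam : ℝ}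

lemma Plam'_nn (hnn : ∀ x y, 0 ≤ P x y) (hπ0 : ∀ x, 0 < π x)
    (hlam0 : 0 < lam) (hlam1 : lam < 1) :
    ∀ z z', 0 ≤ Plam' P π lam z z' := by
  intro z z'
  cases z <;> cases z' <;> simp [Plam']
  · exact (hπ0 _).le
  · exact hlam0.le
  · exact mul_nonneg (by linarith) (hnn _ _)

lemma Plam'_row (hrow : ∀ x, ∑ y, P x y = 1) (hπ1 : ∑ x, π x = 1) :
    ∀ z, ∑ z', Plam' P π lam z z' = 1 := by
  intro z
  cases z with
  | none => rw [Fintype.sum_option]; simp [Plam', hπ1]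
  | some x =>
    rw [Fintype.sum_option]
    simp only [Plam']
    rw [← Finset.mul_sum, hrow]
    ring

lemma Qsucc_some (x : V) (t : ℕ) (R : Finset (Option V)) :
    gtail (Plam' P π lam) (some x) (t+1) R
      = lam * gtail (Plam' P π lam) none t (R.erase (some x))
        + ∑ y, (1 - lam) * P x y * gtail (Plam' P π lam) (some y) t (R.erase (some x)) := by
  rw [gtail_succ, Fintype.sum_option]
  simp [Plam']

lemma Qsucc_none (t : ℕ) (R : Finset (Option V)) :
    gtail (Plam' P π lam) none (t+1) R
      = ∑ y, π y * gtail (Plam' P π lam) (some y) t (R.erase none) := by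
  rw [gtail_succ, Fintype.sum_option]
  simp [Plam']

lemma image_some_erase (R : Finset V) (x : V) :
    (R.image some).erase (some x) = (R.erase x).image some := by
  rw [Finset.image_erase (Option.some_injective V)]

lemma image_some_erase_none (R : Finset V) :
    (R.image some).erase (none : Option V) = R.image some :=
  Finset.erase_eq_of_notMem (by simp)

lemma gtail_zero_image (Q : Option V → Option V → ℝ) (x : V) (R : Finset V) :
    gtail Q (some x) 0 (R.image some) = if (∀ v ∈ R, v = x) then 0 else 1 := by
  rw [gtail_zero]
  refine if_congr ?_ rfl rfl
  constructor
  · intro h v hv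
    have := h (some v) (Finset.mem_image_of_mem some hv)
    injection this
  · intro h v hv
    obtain ⟨u, hu, rfl⟩ := Finset.mem_image.mp hv
    rw [h u hu]

section WithHyps
variable (hnn : ∀ x y, 0 ≤ P x y) (hrow : ∀ x, ∑ y, P x y = 1)
  (hπ0 : ∀ x, 0 < π x) (hπ1 : ∑ x, π x = 1) (hlam0 : 0 < lam) (hlam1 : lam < 1)

local notation "K" => (fun u v => (1 - lam) * P u v + lam * π v : V → V → ℝ)
local notation "Q" => Plam' P π lam

include hnn hrow hπ0 hπ1 hlam0 hlam1

lemma Knn : ∀ u v, 0 ≤ (1 - lam) * P u v + lam * π v := fun u v =>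
  add_nonneg (mul_nonneg (by linarith) (hnn u v)) (mul_nonneg hlam0.le (hπ0 v).le)

lemma Krow : ∀ u, ∑ v, ((1 - lam) * P u v + lam * π v) = 1 := by
  intro u
  rw [Finset.sum_add_distrib, ← Finset.mul_sum, ← Finset.mul_sum, hrow, hπ1]
  ring

lemma le_one : ∀ t x (R : Finset V),
    gtail K x t R ≤ gtail Q (some x) t (R.image some) := by
  intro t
  induction t with
  | zero =>
    intro x R
    rw [gtail_zero, gtail_zero_image]
  | succ t ih =>
    intro x R
    have hQnn := Plam'_nn (P := P) (π := π) (lam := lam) hnn hπ0 hlam0 hlam1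
    have hQrow := Plam'_row (P := P) (π := π) (lam := lam) hrow hπ1
    have hsecond : ∀ R' : Finset V,
        (∑ y, π y * gtail K y t R') ≤ gtail Q none (t+1) (R'.image some) := by
      intro R'
      rw [Qsucc_none, image_some_erase_none]
      exact Finset.sum_le_sum fun y _ =>
        mul_le_mul_of_nonneg_left (ih y R') (hπ0 y).le
    rw [gtail_succ (fun u v => (1 - lam) * P u v + lam * π v) x t R, Qsucc_some,
      image_some_erase]
    have hsplit : (∑ y, ((1 - lam) * P x y + lam * π y) * gtail K y t (R.erase x))
        = (∑ y, (1 - lam) * P x y * gtail K y t (R.erase x))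
          + lam * ∑ y, π y * gtail K y t (R.erase x) := by
      rw [Finset.mul_sum, ← Finset.sum_add_distrib]
      exact Finset.sum_congr rfl fun y _ => by ring
    rw [hsplit]
    rw [add_comm]
    refine add_le_add ?_ ?_
    · refine mul_le_mul_of_nonneg_left ?_ hlam0.le
      calc (∑ y, π y * gtail K y t (R.erase x))
          ≤ gtail Q none (t+1) ((R.erase x).image some) := hsecond (R.erase x)
        _ ≤ gtail Q none t ((R.erase x).image some) :=
            gtail_succ_le hQnn hQrow none t _
    · refine Finset.sum_le_sum fun y _ => ?_
      exact mul_le_mul_of_nonneg_left (ih y (R.erase x))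
        (mul_nonneg (by linarith) (hnn x y))

lemma le_two : ∀ t x (R : Finset V),
    gtail Q (some x) (2*t) (R.image some) ≤ gtail K x t R := by
  intro t
  induction t with
  | zero =>
    intro x R
    rw [Nat.mul_zero, gtail_zero_image, gtail_zero]
  | succ t ih =>
    intro x R
    have hQnn := Plam'_nn (P := P) (π := π) (lam := lam) hnn hπ0 hlam0 hlam1
    have hQrow := Plam'_row (P := P) (π := π) (lam := lam) hrow hπ1
    have harith : 2 * (t + 1) = (2 * t + 1) + 1 := by ring
    rw [harith, Qsucc_some, image_some_erase,
      gtail_succ (fun u v => (1 - lam) * P u v + lam * π v) x t R]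
    have h1 : ∀ y : V, gtail Q (some y) (2*t+1) ((R.erase x).image some)
        ≤ gtail K y t (R.erase x) := fun y =>
      le_trans (gtail_succ_le hQnn hQrow (some y) (2*t) _) (ih y (R.erase x))
    have h2 : gtail Q none (2*t+1) ((R.erase x).image some)
        ≤ ∑ y, π y * gtail K y t (R.erase x) := by
      rw [Qsucc_none, image_some_erase_none]
      exact Finset.sum_le_sum fun y _ => mul_le_mul_of_nonneg_left (ih y _) (hπ0 y).le
    have hsplit : (∑ y, ((1 - lam) * P x y + lam * π y) * gtail K y t (R.erase x))
        = (∑ y, (1 - lam) * P x y * gtail K y t (R.erase x))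
          + lam * ∑ y, π y * gtail K y t (R.erase x) := by
      rw [Finset.mul_sum, ← Finset.sum_add_distrib]
      exact Finset.sum_congr rfl fun y _ => by ring
    rw [hsplit]
    refine le_trans (add_le_add ?_ ?_) (le_of_eq (add_comm _ _))
    · exact mul_le_mul_of_nonneg_left h2 hlam0.le
    · refine Finset.sum_le_sum fun y _ => ?_
      exact mul_le_mul_of_nonneg_left (h1 y)
        (mul_nonneg (by linarith) (hnn x y))

end WithHyps
end Main

section Decay
open Classical
variable {V : Type*} [Fintype V] [DecidableEq V] [Nonempty V]
variable {P : V → V → ℝ} {π : V → ℝ} {lam : ℝ}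

/-- From everywhere-positive entries, a one-block covering bound. -/
lemma gtail_cover_bound {K : V → V → ℝ} {δ : ℝ} (hδ0 : 0 ≤ δ)
    (hδ : ∀ u v, δ ≤ K u v) (hKnn : ∀ u v, 0 ≤ K u v) (hKrow : ∀ u, ∑ v, K u v = 1)
    (y : V) :
    gtail K y (Fintype.card V) Finset.univ ≤ 1 - δ ^ (Fintype.card V) := by
  set n := Fintype.card V with hn
  have hcompl := pathSum_add_compl (P := K) y n (fun w => ∀ v ∈ Finset.univ, ∃ i, w i = v)
  rw [pathSum_total hKrow] at hcompl
  have hgt : gtail K y n Finset.univ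
      = 1 - pathSum K y n (fun w => ∀ v ∈ Finset.univ, ∃ i, w i = v) := by
    unfold gtail
    linarith [hcompl]
  rw [hgt]
  have hpath : δ ^ n ≤ pathSum K y n (fun w => ∀ v ∈ Finset.univ, ∃ i, w i = v) := by
    set e := Fintype.equivFin V with he
    set w0 : Fin (n+1) → V := Fin.cons y (fun i => e.symm (Fin.cast hn.symm i)) with hw0
    have h0 : w0 0 = y := rfl
    have hA : ∀ v ∈ Finset.univ, ∃ i, w0 i = v := by
      intro v _
      refine ⟨(Fin.cast hn (e v)).succ, ?_⟩
      rw [hw0]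
      simp
    calc δ ^ n = ∏ _i : Fin n, δ := by
          rw [Finset.prod_const, Finset.card_univ, Fintype.card_fin]
      _ ≤ ∏ i : Fin n, K (w0 i.castSucc) (w0 i.succ) :=
          Finset.prod_le_prod (fun _ _ => hδ0) (fun i _ => hδ _ _)
      _ ≤ _ := single_le_pathSum hKnn y n _ w0 h0 hA
  linarith

lemma gtail_pow_bound {K : V → V → ℝ} {M : ℝ} (hM0 : 0 ≤ M)
    (hKnn : ∀ u v, 0 ≤ K u v) (hKrow : ∀ u, ∑ v, K u v = 1)
    (hM : ∀ y, gtail K y (Fintype.card V) Finset.univ ≤ M) (x : V) (t : ℕ) :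
    gtail K x t Finset.univ ≤ M ^ (t / Fintype.card V) := by
  set n := Fintype.card V with hn
  have key : ∀ q r (x : V), gtail K x (r + n * q) Finset.univ ≤ M ^ q := by
    intro q
    induction q with
    | zero =>
      intro r x
      simpa using gtail_le_one hKnn hKrow x r Finset.univ
    | succ q ih =>
      intro r x
      have harith : r + n * (q + 1) = (r + n * q) + n := by ring
      rw [harith]
      calc gtail K x ((r + n * q) + n) Finset.univ
          ≤ gtail K x (r + n * q) Finset.univ * M :=
            gtail_submul hKnn hKrow hM0 hM (r + n * q) x Finset.univ
        _ ≤ M ^ q * M := mul_le_mul_of_nonneg_right (ih r x) hM0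
        _ = M ^ (q + 1) := by ring
  have ht : t = t % n + n * (t / n) := (Nat.mod_add_div t n).symm
  calc gtail K x t Finset.univ = gtail K x (t % n + n * (t / n)) Finset.univ := by rw [← ht]
    _ ≤ M ^ (t / n) := key (t / n) (t % n) x

end Decay

lemma Plam_eq_Plam' {V : Type*} (P : V → V → ℝ) (π : V → ℝ) (lam : ℝ) :
    Plam P π lam = Plam' P π lam := by
  funext z z'
  cases z <;> cases z' <;> rfl


/-- started from the same `x ∈ V`, the expected times for the chains
`K_λ` (on `V`) and `P^λ` (on `V ∪ {∂}`) to cover `V` satisfy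
`E_x[τ_cov(K_λ,V)] ≤ E_x[τ_cov(P^λ,V)] ≤ 2·E_x[τ_cov(K_λ,V)]`
(as shown in the paper by a coupling using common geometric(λ) clocks). -/
theorem coupling_cover_time_comparison {V : Type*} [Fintype V] [DecidableEq V]
    [Nonempty V] (P : V → V → ℝ) (π : V → ℝ)
    (hnn : ∀ x y, 0 ≤ P x y) (hrow : ∀ x, ∑ y, P x y = 1)
    (hirr : ∀ x y, ∃ n : ℕ, 0 < (Matrix.of P ^ n) x y)
    (hπ0 : ∀ x, 0 < π x) (hπ1 : ∑ x, π x = 1)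
    (hrev : ∀ x y, π x * P x y = π y * P y x)
    (lam : ℝ) (hlam0 : 0 < lam) (hlam1 : lam < 1) :
    ∀ x : V,
      expCov (fun u v => (1 - lam) * P u v + lam * π v) x
          ≤ expCovV (Plam P π lam) (some x) ∧
        expCovV (Plam P π lam) (some x)
          ≤ 2 * expCov (fun u v => (1 - lam) * P u v + lam * π v) x := by
  classical
  intro x
  set n := Fintype.card V with hn
  have hn0 : 0 < n := Fintype.card_pos
  have hKnn := Knn (P := P) (π := π) (lam := lam) hnn hrow hπ0 hπ1 hlam0 hlam1
  have hKrow := Krow (P := P) (π := π) (lam := lam) hnn hrow hπ0 hπ1 hlam0 hlam1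
  have hQnn := Plam'_nn (P := P) (π := π) (lam := lam) hnn hπ0 hlam0 hlam1
  have hQrow := Plam'_row (P := P) (π := π) (lam := lam) hrow hπ1
  obtain ⟨v0, -, hv0⟩ := Finset.exists_min_image Finset.univ π
    ⟨Classical.arbitrary V, Finset.mem_univ _⟩
  set δ : ℝ := lam * π v0 with hδ
  have hδ0 : 0 < δ := mul_pos hlam0 (hπ0 v0)
  have hδle : ∀ u v, δ ≤ (1 - lam) * P u v + lam * π v := by
    intro u v
    have h1 : lam * π v0 ≤ lam * π v :=
      mul_le_mul_of_nonneg_left (hv0 v (Finset.mem_univ v)) hlam0.le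
    have h2 : 0 ≤ (1 - lam) * P u v := mul_nonneg (by linarith) (hnn u v)
    simp only [hδ]
    linarith
  have hδ1 : δ ≤ 1 := by
    have h1 : δ ≤ (1 - lam) * P v0 v0 + lam * π v0 := hδle v0 v0
    have h2 : (1 - lam) * P v0 v0 + lam * π v0 ≤ 1 := by
      have := Finset.single_le_sum
        (f := fun v => (1 - lam) * P v0 v + lam * π v)
        (fun v _ => hKnn v0 v) (Finset.mem_univ v0)
      rw [hKrow v0] at this
      exact this
    linarith
  set M : ℝ := 1 - δ ^ n with hM
  have hM0 : 0 ≤ M := by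
    have : δ ^ n ≤ 1 := pow_le_one₀ hδ0.le hδ1
    simp only [hM]; linarith
  have hM1 : M < 1 := by
    have : 0 < δ ^ n := pow_pos hδ0 n
    simp only [hM]; linarith
  have hMy : ∀ y, gtail (fun u v => (1 - lam) * P u v + lam * π v) y n Finset.univ ≤ M :=
    gtail_cover_bound hδ0.le hδle hKnn hKrow
  -- the two tail sequences
  set a : ℕ → ℝ := fun t => gtail (fun u v => (1 - lam) * P u v + lam * π v) x t Finset.univ
    with haa
  set b : ℕ → ℝ := fun t =>
    gtail (Plam' P π lam) (some x) t (Finset.univ.image some) with hbb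
  have ha_nn : ∀ t, 0 ≤ a t := fun t => gtail_nonneg hKnn x t _
  have hb_nn : ∀ t, 0 ≤ b t := fun t => gtail_nonneg hQnn (some x) t _
  have ha_bound : ∀ t, a t ≤ M ^ (t / n) := fun t =>
    gtail_pow_bound hM0 hKnn hKrow hMy x t
  have sa : Summable a := summable_of_subgeom ha_nn hM0 hM1 hn0 ha_bound
  have hb_le : ∀ k, b (2 * k) ≤ a k := fun k =>
    le_two hnn hrow hπ0 hπ1 hlam0 hlam1 k x Finset.univ
  have hb_le' : ∀ k, b (2 * k + 1) ≤ a k := fun k =>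
    le_trans (gtail_succ_le hQnn hQrow (some x) (2 * k) _) (hb_le k)
  have hb_bound : ∀ t, b t ≤ M ^ (t / (2 * n)) := by
    intro t
    have h1 : 2 * (t / 2) ≤ t := by omega
    have h2 : b t ≤ b (2 * (t / 2)) := gtail_anti hQnn hQrow (some x) h1 _
    calc b t ≤ b (2 * (t / 2)) := h2
      _ ≤ a (t / 2) := hb_le (t / 2)
      _ ≤ M ^ ((t / 2) / n) := ha_bound (t / 2)
      _ = M ^ (t / (2 * n)) := by rw [Nat.div_div_eq_div_mul]
  have sb : Summable b :=
    summable_of_subgeom hb_nn hM0 hM1 (by omega : 0 < 2 * n) hb_bound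
  -- identification of the expectations
  have heq1 : expCov (fun u v => (1 - lam) * P u v + lam * π v) x = ∑' t, a t := by
    unfold expCov coverTail
    refine tsum_congr fun t => ?_
    refine pathSum_congr _ _ _ fun w _ => ?_
    constructor
    · intro h hcon; exact h fun v => hcon v (Finset.mem_univ v)
    · intro h hcon; exact h fun v _ => hcon v
  have heq1' : expCov (fun u v => (1 - lam) * P u v + lam * π v) x
      = ∑' t, pathSum (fun u v => (1 - lam) * P u v + lam * π v) x t
          (fun w => ¬ ∀ v ∈ Finset.univ, ∃ i, w i = v) := heq1
  have heq2 : expCovV (Plam P π lam) (some x) = ∑' t, b t := by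
    rw [Plam_eq_Plam']
    unfold expCovV
    refine tsum_congr fun t => ?_
    refine pathSum_congr _ _ _ fun w _ => ?_
    refine not_congr ?_
    constructor
    · intro h v' hv'
      obtain ⟨u, _, rfl⟩ := Finset.mem_image.mp hv'
      exact h u
    · intro h v
      exact h (some v) (Finset.mem_image_of_mem some (Finset.mem_univ v))
  rw [heq1, heq2]
  constructor
  · exact Summable.tsum_le_tsum
      (fun t => le_one hnn hrow hπ0 hπ1 hlam0 hlam1 t x Finset.univ) sa sb
  · have hbe : Summable (fun k => b (2 * k)) :=
      sb.comp_injective (fun p q h => by omega)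
    have hbo : Summable (fun k => b (2 * k + 1)) :=
      sb.comp_injective (fun p q h => by omega)
    calc ∑' t, b t = (∑' k, b (2 * k)) + ∑' k, b (2 * k + 1) :=
          (tsum_even_add_odd hbe hbo).symm
      _ ≤ (∑' t, a t) + ∑' t, a t :=
          add_le_add (Summable.tsum_le_tsum hb_le hbe sa) (Summable.tsum_le_tsum hb_le' hbo sa)
      _ = 2 * ∑' t, a t := (two_mul _).symm
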